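/- The function h(α) = (2 sin α + π − 2α)/(2 cos α) on [0, π/3] attains its maximum at α = π/3, where its value equals π/3 + √3. -/

import Mathlib

open Real

private lemma g_hasDeriv (x : ℝ) :
    HasDerivAt (fun x : ℝ => (π/3 + Real.sqrt 3) * (2 * Real.cos x) - (2 * Real.sin x + π - 2*x))
      ((π/3 + Real.sqrt 3) * (2 * (-Real.sin x)) - (2 * Real.cos x - 2)) x := by
  have h1 : HasDerivAt (fun x : ℝ => (π/3 + Real.sqrt 3) * (2 * Real.cos x))
      ((π/3 + Real.sqrt 3) * (2 * (-Real.sin x))) x :=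
    (((Real.hasDerivAt_cos x).const_mul 2).const_mul _)
  have h2 : HasDerivAt (fun x : ℝ => 2 * Real.sin x + π - 2*x) (2 * Real.cos x - 2) x := by
    have := ((Real.hasDerivAt_sin x).const_mul 2).add_const π
    have h3 : HasDerivAt (fun x : ℝ => 2 * Real.sin x + π - 2*x) (2 * Real.cos x - 2 * 1) x :=
      this.sub ((hasDerivAt_id x).const_mul 2)
    simpa using h3
  exact h1.sub h2

private lemma deriv_nonpos {x : ℝ} (hx0 : 0 ≤ x) (hx1 : x ≤ π/3) :
    (π/3 + Real.sqrt 3) * (2 * (-Real.sin x)) - (2 * Real.cos x - 2) ≤ 0 := by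
  have hpi : (0:ℝ) < π := Real.pi_pos
  -- half angle facts
  have hs2 : Real.sin (x/2) ≤ 1/2 := by
    rw [← Real.sin_pi_div_six]
    apply Real.sin_le_sin_of_le_of_le_pi_div_two (by linarith) (by linarith [Real.pi_pos]) (by linarith)
  have hs0 : 0 ≤ Real.sin (x/2) := Real.sin_nonneg_of_nonneg_of_le_pi (by linarith) (by linarith)
  have hc2 : Real.sqrt 3 / 2 ≤ Real.cos (x/2) := by
    rw [← Real.cos_pi_div_six]
    apply Real.cos_le_cos_of_nonneg_of_le_pi (by linarith) (by linarith) (by linarith)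
  have hsin : Real.sin x = 2 * Real.sin (x/2) * Real.cos (x/2) := by
    rw [show x = 2*(x/2) by ring, Real.sin_two_mul]; ring_nf
  have hcos : Real.cos x = 1 - 2 * Real.sin (x/2)^2 := by
    have h := Real.cos_two_mul (x/2)
    rw [show 2*(x/2) = x by ring] at h
    have := Real.sin_sq_add_cos_sq (x/2)
    nlinarith
  have h3 : Real.sqrt 3 ^ 2 = 3 := Real.sq_sqrt (by norm_num)
  have h3pos : (0:ℝ) < Real.sqrt 3 := Real.sqrt_pos.mpr (by norm_num)
  nlinarith [mul_nonneg hs0 (le_trans (by nlinarith) hc2),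
    mul_nonneg hs0 hs0, mul_nonneg (mul_nonneg hs0 hs0) h3pos.le,
    mul_le_mul_of_nonneg_left hc2 hs0]

private lemma key {α : ℝ} (h0 : 0 ≤ α) (h1 : α ≤ π/3) :
    2 * Real.sin α + π - 2*α ≤ (π/3 + Real.sqrt 3) * (2 * Real.cos α) := by
  set g : ℝ → ℝ := fun x => (π/3 + Real.sqrt 3) * (2 * Real.cos x) - (2 * Real.sin x + π - 2*x)
    with hg
  have hanti : AntitoneOn g (Set.Icc 0 (π/3)) := by
    apply antitoneOn_of_deriv_nonpos (convex_Icc _ _)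
    · exact fun x _ => ((g_hasDeriv x).continuousAt).continuousWithinAt
    · exact fun x _ => ((g_hasDeriv x).differentiableAt).differentiableWithinAt
    · intro x hx
      rw [interior_Icc] at hx
      rw [(g_hasDeriv x).deriv]
      exact deriv_nonpos hx.1.le hx.2.le
  have hpi := Real.pi_pos
  have hmem : α ∈ Set.Icc (0:ℝ) (π/3) := ⟨h0, h1⟩
  have hend : (π/3 : ℝ) ∈ Set.Icc (0:ℝ) (π/3) := ⟨by linarith, le_refl _⟩
  have := hanti hmem hend h1
  have hval : g (π/3) = 0 := by
    simp only [hg, Real.cos_pi_div_three, Real.sin_pi_div_three]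
    ring
  rw [hval] at this
  simp only [hg] at this
  linarith

theorem stmt_2 :
    (∀ α ∈ Set.Icc (0:ℝ) (π/3),
      (2 * Real.sin α + π - 2*α) / (2 * Real.cos α)
        ≤ (2 * Real.sin (π/3) + π - 2*(π/3)) / (2 * Real.cos (π/3))) ∧
    (2 * Real.sin (π/3) + π - 2*(π/3)) / (2 * Real.cos (π/3)) = π/3 + Real.sqrt 3 := by
  have hpi := Real.pi_pos
  have hval : (2 * Real.sin (π/3) + π - 2*(π/3)) / (2 * Real.cos (π/3)) = π/3 + Real.sqrt 3 := by
    rw [Real.sin_pi_div_three, Real.cos_pi_div_three]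
    field_simp
    ring
  refine ⟨fun α hα => ?_, hval⟩
  rw [hval]
  have hcos : 0 < Real.cos α := by
    apply Real.cos_pos_of_mem_Ioo
    constructor <;> [linarith [hα.1]; linarith [hα.2]]
  rw [div_le_iff₀ (by linarith)]
  have := key hα.1 hα.2
  linarith
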